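/- Assume R is of type D_n (n ≥ 4), E_6, E_7 or E_8, and let α_r be the unique simple root such that α_0 = ω_r (namely r = 2 in types D_n and E_6, r = 1 in type E_7, and r = 8 in type E_8). Then w_{0, S∖{α_r}}(α_r) = α_0 − α_r. -/

import Mathlib

noncomputable section

open scoped Classical

local notation "⟪" x ", " y "⟫" => @inner ℝ _ _ x y

namespace PaperFormal

variable (V : Type*) [NormedAddCommGroup V] [InnerProductSpace ℝ V] [FiniteDimensional ℝ V]

/-- The reflection of the Euclidean space `V` in the hyperplane orthogonal to `v`,
i.e. `β ↦ β - (2⟪β,v⟫/⟪v,v⟫) v`. -/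
def sref (v : V) : V ≃ₗᵢ[ℝ] V := Submodule.reflection (ℝ ∙ v)ᗮ

/-- A reduced irreducible crystallographic root system `R` in the Euclidean space `V`,
together with a fixed base of simple roots `a 1, …, a n`. -/
structure RootSystemWithBase (n : ℕ) : Type _ where
  /-- the set of roots -/
  R : Set V
  /-- the simple roots `a 1, …, a n` (values outside `{1, …, n}` are irrelevant) -/
  a : ℕ → V
  finite : R.Finite
  ne_zero : ∀ β ∈ R, β ≠ 0
  refl_mem : ∀ α ∈ R, ∀ β ∈ R, sref V α β ∈ R
  crystallographic : ∀ α ∈ R, ∀ β ∈ R, ∃ k : ℤ, 2 * ⟪β, α⟫ / ⟪α, α⟫ = (k : ℝ)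
  reduced : ∀ α ∈ R, ∀ t : ℝ, t • α ∈ R → t = 1 ∨ t = -1
  irreducible : ∀ P : Set V, (∀ x ∈ R, ∀ y ∈ R, x ∈ P → ⟪x, y⟫ ≠ 0 → y ∈ P) →
      (R ∩ P).Nonempty → R ⊆ P
  simple_mem : ∀ i ∈ Finset.Icc 1 n, a i ∈ R
  indep : LinearIndependent ℝ (fun i : (Set.Icc 1 n : Set ℕ) => a i)
  span_top : Submodule.span ℝ (a '' Set.Icc 1 n) = ⊤
  root_combo : ∀ β ∈ R, ∃ c : ℕ → ℤ, ((∀ i, 0 ≤ c i) ∨ (∀ i, c i ≤ 0)) ∧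
      β = ∑ i ∈ Finset.Icc 1 n, (c i : ℝ) • a i

namespace RootSystemWithBase

variable {V} {n : ℕ} (S : RootSystemWithBase V n)

/-- The simple reflection `s i` associated to the simple root `a i`. -/
def s (i : ℕ) : V ≃ₗᵢ[ℝ] V := sref V (S.a i)

/-- The product of the simple reflections along a list of indices
(leftmost factor acting last). -/
def prodW (l : List ℕ) : V ≃ₗᵢ[ℝ] V := (l.map S.s).prod

/-- The parabolic subgroup `W_J` of the Weyl group generated by the simple reflections
`s i` for `i ∈ J`. -/
def WJ (J : Set ℕ) : Subgroup (V ≃ₗᵢ[ℝ] V) :=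
  Subgroup.closure (S.s '' (J ∩ Set.Icc 1 n))

/-- The Weyl group `W`, generated by all simple reflections. -/
def W : Subgroup (V ≃ₗᵢ[ℝ] V) := S.WJ Set.univ

/-- The length of `w` with respect to the simple reflections indexed by `J`:
the least length of a word in these reflections expressing `w`. -/
def lenJ (J : Set ℕ) (w : V ≃ₗᵢ[ℝ] V) : ℕ :=
  sInf {k | ∃ l : List ℕ, (∀ i ∈ l, i ∈ J ∩ Set.Icc 1 n) ∧ l.length = k ∧ w = S.prodW l}

/-- The length function `ℓ` of the Weyl group. -/
def len (w : V ≃ₗᵢ[ℝ] V) : ℕ := S.lenJ Set.univ w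

/-- `w` is the longest element `w_{0,J}` of the parabolic subgroup `W_J`. -/
def IsLongest (J : Set ℕ) (w : V ≃ₗᵢ[ℝ] V) : Prop :=
  w ∈ S.WJ J ∧ ∀ x ∈ S.WJ J, S.lenJ J x ≤ S.lenJ J w

/-- `β` is a positive root (with respect to the base `a`). -/
def IsPos (β : V) : Prop :=
  β ∈ S.R ∧ ∃ c : ℕ → ℝ, (∀ i, 0 ≤ c i) ∧ β = ∑ i ∈ Finset.Icc 1 n, c i • S.a i

/-- `β` is a negative root. -/
def IsNeg (β : V) : Prop := S.IsPos (-β)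

/-- `h` is the highest root `α_0`: a root such that `h - β` is a nonnegative combination of
the simple roots for every root `β`. -/
def IsHighest (h : V) : Prop :=
  h ∈ S.R ∧ ∀ β ∈ S.R, ∃ c : ℕ → ℝ, (∀ i, 0 ≤ c i) ∧
    h - β = ∑ i ∈ Finset.Icc 1 n, c i • S.a i

/-- The root system is simply laced: all roots have the same length. -/
def SimplyLaced : Prop := ∀ α ∈ S.R, ∀ β ∈ S.R, ⟪α, α⟫ = ⟪β, β⟫

/-- `ω` is the fundamental weight `ω_r` dual to the simple root `a r`:
`⟨ω, a j⟩ = δ_{rj}` for `1 ≤ j ≤ n`. -/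
def IsFundamental (r : ℕ) (ω : V) : Prop :=
  ∀ j ∈ Finset.Icc 1 n, 2 * ⟪ω, S.a j⟫ / ⟪S.a j, S.a j⟫ = if j = r then 1 else 0

/-- A weight `ω` is minuscule: `⟨ω, β⟩ ≤ 1` for every positive root `β`. -/
def Minuscule (ω : V) : Prop := ∀ β, S.IsPos β → 2 * ⟪ω, β⟫ / ⟪β, β⟫ ≤ 1

end RootSystemWithBase

namespace RootSystemWithBase

variable {V : Type*} [NormedAddCommGroup V] [InnerProductSpace ℝ V] [FiniteDimensional ℝ V]
variable {n : ℕ} (S : RootSystemWithBase V n)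

lemma sref_apply' (v x : V) : sref V v x = x - (2 * ⟪x, v⟫ / ⟪v, v⟫) • v := by
  rw [sref, Submodule.reflection_orthogonal_apply, Submodule.reflection_singleton_apply,
    real_inner_self_eq_norm_sq, real_inner_comm]
  simp only [RCLike.ofReal_real_eq_id, id_eq]
  rw [two_smul]
  module

lemma sref_self' (v : V) : sref V v v = -v :=
  Submodule.reflection_orthogonalComplement_singleton_eq_neg v

lemma sref_conj (g : V ≃ₗᵢ[ℝ] V) (v : V) :
    g * sref V v * g⁻¹ = sref V (g v) := by
  ext x
  have h1 : (g * sref V v * g⁻¹) x = g (sref V v (g.symm x)) := rfl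
  rw [h1, sref_apply', sref_apply', map_sub, LinearIsometryEquiv.map_smul,
    LinearIsometryEquiv.apply_symm_apply]
  congr 2
  rw [← LinearIsometryEquiv.inner_map_map g (g.symm x) v, LinearIsometryEquiv.apply_symm_apply,
    ← LinearIsometryEquiv.inner_map_map g v v]

lemma coeff_unique {c d : ℕ → ℝ}
    (h : ∑ i ∈ Finset.Icc 1 n, c i • S.a i = ∑ i ∈ Finset.Icc 1 n, d i • S.a i) :
    ∀ i ∈ Finset.Icc 1 n, c i = d i := by
  intro i hi
  have hmem : ∀ x : ℕ, x ∈ Finset.Icc 1 n ↔ x ∈ Set.Icc 1 n := by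
    intro x; rw [Finset.mem_Icc, Set.mem_Icc]
  have hz : ∑ j ∈ Finset.Icc 1 n, (c j - d j) • S.a j = 0 := by
    simp only [sub_smul]
    rw [Finset.sum_sub_distrib, h, sub_self]
  have hz' : ∑ j : (Set.Icc 1 n : Set ℕ), (c (j : ℕ) - d (j : ℕ)) • S.a (j : ℕ) = 0 := by
    rw [← Finset.sum_subtype (Finset.Icc 1 n) hmem (fun j => (c j - d j) • S.a j)]
    exact hz
  have := (Fintype.linearIndependent_iff.mp S.indep) (fun j => c (j : ℕ) - d (j : ℕ)) hz'
    ⟨i, (hmem i).mp hi⟩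
  simpa [sub_eq_zero] using this

lemma neg_mem {β : V} (hβ : β ∈ S.R) : -β ∈ S.R := by
  have := S.refl_mem β hβ β hβ
  rwa [sref_self'] at this

lemma pos_or_neg {β : V} (hβ : β ∈ S.R) : S.IsPos β ∨ S.IsNeg β := by
  obtain ⟨c, hc | hc, hrep⟩ := S.root_combo β hβ
  · exact Or.inl ⟨hβ, fun i => (c i : ℝ),
      fun i => by show (0:ℝ) ≤ ((c i : ℤ) : ℝ); exact_mod_cast hc i, hrep⟩
  · refine Or.inr ⟨S.neg_mem hβ, fun i => -(c i : ℝ),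
      fun i => by show (0:ℝ) ≤ -((c i : ℤ) : ℝ); rw [neg_nonneg]; exact_mod_cast hc i, ?_⟩
    rw [hrep, ← Finset.sum_neg_distrib]
    exact Finset.sum_congr rfl (fun i _ => (neg_smul _ _).symm)

lemma not_pos_and_neg {β : V} (hp : S.IsPos β) (hn : S.IsNeg β) : False := by
  obtain ⟨hβR, c, hc, hcrep⟩ := hp
  obtain ⟨_, d, hd, hdrep⟩ := hn
  have hsum : ∑ i ∈ Finset.Icc 1 n, (c i + d i) • S.a i
      = ∑ i ∈ Finset.Icc 1 n, (0 : ℝ) • S.a i := by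
    simp only [add_smul, zero_smul, Finset.sum_add_distrib, ← hcrep, ← hdrep,
      Finset.sum_const_zero]
    exact add_neg_cancel β
  have hzero := S.coeff_unique hsum
  have hβ0 : β = 0 := by
    rw [hcrep]
    refine Finset.sum_eq_zero fun i hi => ?_
    have h1 := hzero i hi
    have := hc i; have := hd i
    have : c i = 0 := by linarith
    simp [this]
  exact S.ne_zero β hβR hβ0

lemma inner_self_pos' {β : V} (hβ : β ≠ 0) : 0 < ⟪β, β⟫ :=
  lt_of_le_of_ne real_inner_self_nonneg
    (fun h0 => hβ (inner_self_eq_zero.mp h0.symm))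

lemma inner_self_pos {β : V} (hβ : β ∈ S.R) : 0 < ⟪β, β⟫ :=
  inner_self_pos' (S.ne_zero β hβ)

lemma simple_isPos {j : ℕ} (hj : j ∈ Finset.Icc 1 n) : S.IsPos (S.a j) := by
  refine ⟨S.simple_mem j hj, fun k => if k = j then 1 else 0,
    fun k => by dsimp only; split <;> norm_num, ?_⟩
  have h : ∑ i ∈ Finset.Icc 1 n, (if i = j then (1:ℝ) else 0) • S.a i = S.a j := by
    simp only [ite_smul, one_smul, zero_smul, Finset.sum_ite_eq', hj, if_true]
  exact h.symm

lemma prodW_nil : S.prodW [] = 1 := by simp [prodW]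

lemma prodW_cons (i : ℕ) (l : List ℕ) : S.prodW (i :: l) = S.s i * S.prodW l := by
  simp [prodW]

lemma prodW_singleton (i : ℕ) : S.prodW [i] = S.s i := by simp [prodW]

lemma prodW_append (l₁ l₂ : List ℕ) : S.prodW (l₁ ++ l₂) = S.prodW l₁ * S.prodW l₂ := by
  simp [prodW]

lemma mul_apply (f g : V ≃ₗᵢ[ℝ] V) (x : V) : (f * g) x = f (g x) := rfl

lemma inv_apply_apply (g : V ≃ₗᵢ[ℝ] V) (x : V) : g (g⁻¹ x) = x :=
  g.apply_symm_apply x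

lemma s_mul_self (i : ℕ) : S.s i * S.s i = 1 := Submodule.reflection_mul_reflection _

lemma s_inv (i : ℕ) : (S.s i)⁻¹ = S.s i := Submodule.reflection_inv

lemma s_apply_self (i : ℕ) : S.s i (S.a i) = -S.a i := sref_self' _

lemma prodW_reverse (l : List ℕ) : S.prodW l.reverse = (S.prodW l)⁻¹ := by
  induction l with
  | nil => simp [prodW]
  | cons i t ih =>
      rw [List.reverse_cons, prodW_append, prodW_singleton, ih, prodW_cons, mul_inv_rev, s_inv]

lemma exists_word {J : Set ℕ} {w : V ≃ₗᵢ[ℝ] V} (hw : w ∈ S.WJ J) :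
    ∃ l : List ℕ, (∀ i ∈ l, i ∈ J ∩ Set.Icc 1 n) ∧ w = S.prodW l := by
  induction hw using Subgroup.closure_induction with
  | mem x hx =>
      obtain ⟨i, hi, rfl⟩ := hx
      exact ⟨[i], by simpa using hi, (S.prodW_singleton i).symm⟩
  | one => exact ⟨[], by simp, (S.prodW_nil).symm⟩
  | mul x y hx hy ihx ihy =>
      obtain ⟨l₁, h₁, rfl⟩ := ihx
      obtain ⟨l₂, h₂, rfl⟩ := ihy
      refine ⟨l₁ ++ l₂, ?_, (S.prodW_append l₁ l₂).symm⟩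
      intro i hi
      rcases List.mem_append.mp hi with h | h
      exacts [h₁ i h, h₂ i h]
  | inv x hx ihx =>
      obtain ⟨l, hl, rfl⟩ := ihx
      exact ⟨l.reverse, fun i hi => hl i (List.mem_reverse.mp hi), (S.prodW_reverse l).symm⟩

lemma lenJ_le {J : Set ℕ} {w : V ≃ₗᵢ[ℝ] V} {l : List ℕ}
    (hl : ∀ i ∈ l, i ∈ J ∩ Set.Icc 1 n) (hw : w = S.prodW l) :
    S.lenJ J w ≤ l.length :=
  Nat.sInf_le ⟨l, hl, rfl, hw⟩

lemma exists_min_word {J : Set ℕ} {w : V ≃ₗᵢ[ℝ] V} (hw : w ∈ S.WJ J) :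
    ∃ l : List ℕ, (∀ i ∈ l, i ∈ J ∩ Set.Icc 1 n) ∧ l.length = S.lenJ J w ∧ w = S.prodW l := by
  have hne : {k | ∃ l : List ℕ, (∀ i ∈ l, i ∈ J ∩ Set.Icc 1 n) ∧ l.length = k
      ∧ w = S.prodW l}.Nonempty := by
    obtain ⟨l, hl, hwl⟩ := S.exists_word hw
    exact ⟨l.length, l, hl, rfl, hwl⟩
  exact Nat.sInf_mem hne

lemma lenJ_inv_le {J : Set ℕ} {w : V ≃ₗᵢ[ℝ] V} (hw : w ∈ S.WJ J) :
    S.lenJ J w⁻¹ ≤ S.lenJ J w := by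
  obtain ⟨l, hl, hlen, hwl⟩ := S.exists_min_word hw
  calc S.lenJ J w⁻¹ ≤ l.reverse.length :=
        S.lenJ_le (fun i hi => hl i (List.mem_reverse.mp hi))
          (by rw [S.prodW_reverse, hwl])
    _ = S.lenJ J w := by rw [List.length_reverse, hlen]

lemma isLongest_inv {J : Set ℕ} {w : V ≃ₗᵢ[ℝ] V} (hw : S.IsLongest J w) :
    S.IsLongest J w⁻¹ := by
  refine ⟨inv_mem hw.1, fun x hx => ?_⟩
  have h1 : S.lenJ J w ≤ S.lenJ J w⁻¹ := by
    have := S.lenJ_inv_le (inv_mem hw.1)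
    rwa [inv_inv] at this
  exact le_trans (hw.2 x hx) h1

lemma prodW_mem_R {l : List ℕ} (hl : ∀ i ∈ l, i ∈ Set.Icc 1 n) {β : V} (hβ : β ∈ S.R) :
    S.prodW l β ∈ S.R := by
  induction l with
  | nil => simpa [prodW] using hβ
  | cons i t ih =>
      rw [prodW_cons, mul_apply]
      have hi : S.a i ∈ S.R := S.simple_mem i (by
        have := hl i (by simp); rw [Finset.mem_Icc]; rwa [Set.mem_Icc] at this)
      exact S.refl_mem (S.a i) hi _ (ih fun j hj => hl j (List.mem_cons_of_mem _ hj))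

lemma WJ_mem_R {J : Set ℕ} {w : V ≃ₗᵢ[ℝ] V} (hw : w ∈ S.WJ J) {β : V} (hβ : β ∈ S.R) :
    w β ∈ S.R := by
  obtain ⟨l, hl, rfl⟩ := S.exists_word hw
  exact S.prodW_mem_R (fun i hi => (hl i hi).2) hβ

lemma eq_simple_of_pos_neg {i : ℕ} (hi : i ∈ Finset.Icc 1 n) {β : V}
    (hp : S.IsPos β) (hn : S.IsNeg (S.s i β)) : β = S.a i := by
  obtain ⟨hβR, c, hc, hcrep⟩ := hp
  obtain ⟨_, d, hd, hdrep⟩ := hn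
  set k : ℝ := 2 * ⟪β, S.a i⟫ / ⟪S.a i, S.a i⟫ with hk
  have hsub : β - S.s i β = k • S.a i := by
    rw [show S.s i β = sref V (S.a i) β from rfl, sref_apply']
    abel
  have hsum : ∑ j ∈ Finset.Icc 1 n, (c j + d j) • S.a j
      = ∑ j ∈ Finset.Icc 1 n, (if j = i then k else 0) • S.a j := by
    have hrhs : ∑ j ∈ Finset.Icc 1 n, (if j = i then k else 0) • S.a j = k • S.a i := by
      simp only [ite_smul, zero_smul, Finset.sum_ite_eq', hi, if_true]
    rw [hrhs, ← hsub, sub_eq_add_neg, hdrep, hcrep]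
    simp [add_smul, Finset.sum_add_distrib]
  have huniq := S.coeff_unique hsum
  have hcz : ∀ j ∈ Finset.Icc 1 n, j ≠ i → c j = 0 := by
    intro j hj hji
    have := huniq j hj
    rw [if_neg hji] at this
    have := hc j; have := hd j
    linarith
  have hβ : β = c i • S.a i := by
    rw [hcrep, Finset.sum_eq_single i (fun j hj hji => by rw [hcz j hj hji, zero_smul])
      (fun h => absurd hi h)]
  have := S.reduced (S.a i) (S.simple_mem i hi) (c i) (by rw [← hβ]; exact hβR)
  rcases this with h1 | h1
  · rw [hβ, h1, one_smul]
  · exfalso; have := hc i; rw [h1] at this; linarith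

lemma exchange_aux {J : Set ℕ} {j : ℕ} (hj : j ∈ J ∩ Set.Icc 1 n) :
    ∀ l : List ℕ, (∀ i ∈ l, i ∈ J ∩ Set.Icc 1 n) → S.IsNeg (S.prodW l (S.a j)) →
    ∃ l' : List ℕ, (∀ i ∈ l', i ∈ J ∩ Set.Icc 1 n) ∧ l'.length + 1 = l.length ∧
      S.prodW l * S.s j = S.prodW l' := by
  intro l
  induction l with
  | nil =>
      intro _ hneg
      exfalso
      have hjI : j ∈ Finset.Icc 1 n := by rw [Finset.mem_Icc]; exact (Set.mem_Icc).mp hj.2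
      refine S.not_pos_and_neg (S.simple_isPos hjI) ?_
      simpa [prodW] using hneg
  | cons i t ih =>
      intro hl hneg
      have hiJ : i ∈ J ∩ Set.Icc 1 n := hl i (by simp)
      have hiI : i ∈ Finset.Icc 1 n := by rw [Finset.mem_Icc]; exact (Set.mem_Icc).mp hiJ.2
      have hjI : j ∈ Finset.Icc 1 n := by rw [Finset.mem_Icc]; exact (Set.mem_Icc).mp hj.2
      have htl : ∀ i' ∈ t, i' ∈ J ∩ Set.Icc 1 n := fun i' hi' => hl i' (List.mem_cons_of_mem _ hi')
      have htR : S.prodW t (S.a j) ∈ S.R :=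
        S.prodW_mem_R (fun i' hi' => (htl i' hi').2) (S.simple_mem j hjI)
      have happ : S.prodW (i :: t) (S.a j) = S.s i (S.prodW t (S.a j)) := by
        rw [prodW_cons, mul_apply]
      rcases S.pos_or_neg htR with hpos | hneg'
      · -- prodW t (a j) is positive, but s i of it is negative, so it equals a i
        have heq : S.prodW t (S.a j) = S.a i :=
          S.eq_simple_of_pos_neg hiI hpos (by rw [← happ]; exact hneg)
        have hconj : S.prodW t * S.s j * (S.prodW t)⁻¹ = S.s i := by
          rw [show S.s j = sref V (S.a j) from rfl, sref_conj, heq]; rfl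
        refine ⟨t, htl, by simp, ?_⟩
        rw [prodW_cons, ← hconj, inv_mul_cancel_right, mul_assoc, s_mul_self, mul_one]
      · obtain ⟨t', ht', hlen, heq⟩ := ih htl hneg'
        refine ⟨i :: t', ?_, by simpa using hlen, ?_⟩
        · intro i' hi'
          rcases List.mem_cons.mp hi' with rfl | h
          exacts [hiJ, ht' i' h]
        · rw [prodW_cons, prodW_cons, mul_assoc, heq]

lemma len_mul_s_lt {J : Set ℕ} {j : ℕ} (hj : j ∈ J ∩ Set.Icc 1 n) {w : V ≃ₗᵢ[ℝ] V}
    (hw : w ∈ S.WJ J) (hneg : S.IsNeg (w (S.a j))) :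
    S.lenJ J (w * S.s j) < S.lenJ J w := by
  obtain ⟨l, hl, hlen, rfl⟩ := S.exists_min_word hw
  obtain ⟨l', hl', hlen', heq⟩ := S.exchange_aux hj l hl hneg
  have h1 : S.lenJ J (S.prodW l * S.s j) ≤ l'.length := S.lenJ_le hl' heq
  omega

lemma longest_neg {J : Set ℕ} {j : ℕ} (hj : j ∈ J ∩ Set.Icc 1 n) {w : V ≃ₗᵢ[ℝ] V}
    (hw : S.IsLongest J w) : S.IsNeg (w (S.a j)) := by
  have hjI : j ∈ Finset.Icc 1 n := by rw [Finset.mem_Icc]; exact (Set.mem_Icc).mp hj.2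
  have hwa : w (S.a j) ∈ S.R := S.WJ_mem_R hw.1 (S.simple_mem j hjI)
  rcases S.pos_or_neg hwa with hp | hn
  · exfalso
    have hsj : S.s j ∈ S.WJ J := Subgroup.subset_closure ⟨j, hj, rfl⟩
    have hw' : w * S.s j ∈ S.WJ J := mul_mem hw.1 hsj
    have hneg : S.IsNeg ((w * S.s j) (S.a j)) := by
      rw [mul_apply, s_apply_self, map_neg]
      show S.IsPos (- -(w (S.a j)))
      rwa [neg_neg]
    have hlt := S.len_mul_s_lt hj hw' hneg
    rw [mul_assoc, s_mul_self, mul_one] at hlt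
    exact absurd (hw.2 _ hw') (by omega)
  · exact hn

lemma simple_inner_nonpos (hsl : S.SimplyLaced) {i k : ℕ}
    (hi : i ∈ Finset.Icc 1 n) (hk : k ∈ Finset.Icc 1 n) (hik : i ≠ k) :
    ⟪S.a i, S.a k⟫ ≤ 0 := by
  by_contra hpos
  push_neg at hpos
  have hiR := S.simple_mem i hi
  have hkR := S.simple_mem k hk
  have hN0 : 0 < ⟪S.a i, S.a i⟫ := S.inner_self_pos hiR
  have hNk : ⟪S.a k, S.a k⟫ = ⟪S.a i, S.a i⟫ := hsl _ hkR _ hiR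
  have hcomm : ⟪S.a k, S.a i⟫ = ⟪S.a i, S.a k⟫ := real_inner_comm _ _
  have hne : S.a k ≠ S.a i := by
    intro h
    have hmem : ∀ x : ℕ, x ∈ Finset.Icc 1 n ↔ x ∈ Set.Icc 1 n := by
      intro x; rw [Finset.mem_Icc, Set.mem_Icc]
    have : (⟨k, (hmem k).mp hk⟩ : (Set.Icc 1 n : Set ℕ)) = ⟨i, (hmem i).mp hi⟩ :=
      S.indep.injective h
    exact hik (by simpa using this.symm)
  have hlt : ⟪S.a i, S.a k⟫ < ⟪S.a i, S.a i⟫ := by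
    have h1 : 0 < ⟪S.a k - S.a i, S.a k - S.a i⟫ :=
      inner_self_pos' (sub_ne_zero.mpr hne)
    rw [inner_sub_sub_self] at h1
    nlinarith
  obtain ⟨z, hz⟩ := S.crystallographic (S.a i) hiR (S.a k) hkR
  have hz1 : (2 : ℝ) * ⟪S.a k, S.a i⟫ / ⟪S.a i, S.a i⟫ = 1 := by
    have h1 : (0:ℝ) < 2 * ⟪S.a k, S.a i⟫ / ⟪S.a i, S.a i⟫ :=
      div_pos (by rw [hcomm]; linarith) hN0
    have h2 : (2:ℝ) * ⟪S.a k, S.a i⟫ / ⟪S.a i, S.a i⟫ < 2 := by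
      rw [div_lt_iff₀ hN0, hcomm]; linarith
    rw [hz] at h1 h2 ⊢
    have hz0 : (0:ℤ) < z := by exact_mod_cast h1
    have hz2 : z < 2 := by exact_mod_cast h2
    have : z = 1 := by omega
    rw [this]; norm_num
  have hroot : S.a k - S.a i ∈ S.R := by
    have := S.refl_mem (S.a i) hiR (S.a k) hkR
    rwa [sref_apply', hz1, one_smul] at this
  obtain ⟨c, hsign, hrep⟩ := S.root_combo _ hroot
  have hrep2 : ∑ p ∈ Finset.Icc 1 n, ((c p : ℝ)) • S.a p
      = ∑ p ∈ Finset.Icc 1 n,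
        ((if p = k then (1:ℝ) else 0) - (if p = i then 1 else 0)) • S.a p := by
    rw [← hrep]
    simp only [sub_smul, Finset.sum_sub_distrib, ite_smul, one_smul, zero_smul,
      Finset.sum_ite_eq', hi, hk, if_true]
  have huniq := S.coeff_unique hrep2
  have hck : ((c k : ℤ) : ℝ) = 1 := by simpa [Ne.symm hik] using huniq k hk
  have hci : ((c i : ℤ) : ℝ) = -1 := by simpa [hik] using huniq i hi
  have hck' : c k = 1 := by exact_mod_cast hck
  have hci' : c i = -1 := by exact_mod_cast hci
  rcases hsign with h | h
  · have := h i; omega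
  · have := h k; omega

lemma WJ_fixes {r : ℕ} {ω : V} (hfund : S.IsFundamental r ω) {w : V ≃ₗᵢ[ℝ] V}
    (hw : w ∈ S.WJ (Set.Icc 1 n \ {r})) : w ω = ω := by
  induction hw using Subgroup.closure_induction with
  | mem x hx =>
      obtain ⟨i, hi, rfl⟩ := hx
      have hiI : i ∈ Finset.Icc 1 n := by rw [Finset.mem_Icc]; exact Set.mem_Icc.mp hi.2
      have hir : i ≠ r := hi.1.2
      have hzero := hfund i hiI
      rw [if_neg hir] at hzero
      show sref V (S.a i) ω = ω
      rw [sref_apply', hzero, zero_smul, sub_zero]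
  | one => rfl
  | mul x y hx hy ihx ihy =>
      show x (y ω) = ω
      rw [ihy, ihx]
  | inv x hx ihx =>
      calc x⁻¹ ω = x⁻¹ (x ω) := by rw [ihx]
        _ = ω := x.symm_apply_apply ω

end RootSystemWithBase

open RootSystemWithBase


variable {V}

/-- Assume `R` is of type `D_n` (`n ≥ 4`), `E_6`, `E_7` or `E_8` — i.e. `R`
is (irreducible and) simply laced and its highest root `α_0` equals a fundamental weight —
and let `α_r` be the unique simple root such that `α_0 = ω_r`.  Then
`w_{0, S∖{α_r}}(α_r) = α_0 - α_r`. -/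
theorem statement5 {n : ℕ} (S : RootSystemWithBase V n) (hsl : S.SimplyLaced)
    (r : ℕ) (hr : r ∈ Finset.Icc 1 n) (α0 : V) (hα0 : S.IsHighest α0)
    (hfund : S.IsFundamental r α0)
    (w0J : V ≃ₗᵢ[ℝ] V) (hw0J : S.IsLongest (Set.Icc 1 n \ {r}) w0J) :
    w0J (S.a r) = α0 - S.a r := by
  classical
  have hα0R : α0 ∈ S.R := hα0.1
  have harR : S.a r ∈ S.R := S.simple_mem r hr
  have hN0 : 0 < ⟪α0, α0⟫ := S.inner_self_pos hα0R
  have hNi : ∀ i ∈ Finset.Icc 1 n, ⟪S.a i, S.a i⟫ = ⟪α0, α0⟫ := fun i hi =>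
    hsl _ (S.simple_mem i hi) _ hα0R
  have finner : ∀ i ∈ Finset.Icc 1 n, ⟪α0, S.a i⟫ = if i = r then ⟪α0, α0⟫ / 2 else 0 := by
    intro i hi
    have h1 := hfund i hi
    have h3 : 0 < ⟪S.a i, S.a i⟫ := S.inner_self_pos (S.simple_mem i hi)
    rw [div_eq_iff (ne_of_gt h3)] at h1
    rw [hNi i hi] at h1
    by_cases hir : i = r
    · rw [if_pos hir] at h1 ⊢; linarith
    · rw [if_neg hir] at h1 ⊢; linarith
  have hw0 : w0J ∈ S.WJ (Set.Icc 1 n \ {r}) := hw0J.1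
  have hfix0 : w0J α0 = α0 := S.WJ_fixes hfund hw0
  have hw0inv : S.IsLongest (Set.Icc 1 n \ {r}) w0J⁻¹ := S.isLongest_inv hw0J
  have hfixinv : w0J⁻¹ α0 = α0 := S.WJ_fixes hfund (inv_mem hw0)
  set β := w0J (S.a r) with hβ
  have hβR : β ∈ S.R := S.WJ_mem_R hw0 harR
  have hβα0 : ⟪β, α0⟫ = ⟪α0, α0⟫ / 2 := by
    have h2 : ⟪w0J (S.a r), w0J α0⟫ = ⟪S.a r, α0⟫ :=
      LinearIsometryEquiv.inner_map_map w0J _ _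
    rw [hfix0] at h2
    rw [hβ, h2, real_inner_comm, finner r hr, if_pos rfl]
  have hββ : ⟪β, β⟫ = ⟪α0, α0⟫ := by
    rw [hβ, LinearIsometryEquiv.inner_map_map]
    exact hNi r hr
  obtain ⟨c, hc, hcrep⟩ := hα0.2 β hβR
  have hsum_inner : ∀ d : ℕ → ℝ,
      ⟪∑ i ∈ Finset.Icc 1 n, d i • S.a i, α0⟫ = d r * (⟪α0, α0⟫ / 2) := by
    intro d
    rw [sum_inner]
    have hterm : ∀ i ∈ Finset.Icc 1 n,
        ⟪d i • S.a i, α0⟫ = if i = r then d i * (⟪α0, α0⟫ / 2) else 0 := by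
      intro i hi
      rw [real_inner_smul_left, real_inner_comm, finner i hi]
      by_cases hir : i = r
      · rw [if_pos hir, if_pos hir]
      · rw [if_neg hir, if_neg hir, mul_zero]
    rw [Finset.sum_congr rfl hterm,
      Finset.sum_ite_eq' (Finset.Icc 1 n) r (fun i => d i * (⟪α0, α0⟫ / 2)), if_pos hr]
  have hcr : c r = 1 := by
    have hL : ⟪α0 - β, α0⟫ = ⟪α0, α0⟫ / 2 := by
      rw [inner_sub_left, hβα0]; ring
    rw [hcrep, hsum_inner c] at hL
    have h2 : (⟪α0, α0⟫ / 2) ≠ 0 := by positivity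
    exact mul_right_cancel₀ h2 (by rw [one_mul]; exact hL)
  have hord : ∀ i ∈ Finset.Icc 1 n, i ≠ r → 0 ≤ ⟪β, S.a i⟫ := by
    intro i hi hir
    have hiS : i ∈ Set.Icc 1 n := by rw [Set.mem_Icc]; exact Finset.mem_Icc.mp hi
    have hiJ : i ∈ (Set.Icc 1 n \ {r}) ∩ Set.Icc 1 n := ⟨⟨hiS, by simpa using hir⟩, hiS⟩
    obtain ⟨hmem', d, hd, hdrep⟩ := S.longest_neg hiJ hw0inv
    have hdr0 : d r = 0 := by
      have h1 : ⟪w0J⁻¹ (S.a i), α0⟫ = 0 := by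
        have h2 : ⟪w0J⁻¹ (S.a i), w0J⁻¹ α0⟫ = ⟪S.a i, α0⟫ :=
          LinearIsometryEquiv.inner_map_map _ _ _
        rw [hfixinv] at h2
        rw [h2, real_inner_comm, finner i hi, if_neg hir]
      have h3 : ⟪-(w0J⁻¹ (S.a i)), α0⟫ = d r * (⟪α0, α0⟫ / 2) := by
        rw [hdrep]; exact hsum_inner d
      rw [inner_neg_left, h1, neg_zero] at h3
      have h4 : (⟪α0, α0⟫ / 2) ≠ 0 := by positivity
      exact (mul_eq_zero.mp h3.symm).resolve_right h4
    have h5 : w0J⁻¹ (S.a i) = -∑ k ∈ Finset.Icc 1 n, d k • S.a k := by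
      rw [← hdrep, neg_neg]
    have h6 : ⟪β, S.a i⟫ = ⟪S.a r, w0J⁻¹ (S.a i)⟫ := by
      rw [hβ]
      conv_lhs => rw [← inv_apply_apply w0J (S.a i)]
      exact LinearIsometryEquiv.inner_map_map w0J _ _
    rw [h6, h5, inner_neg_right, inner_sum, neg_nonneg]
    refine Finset.sum_nonpos fun k hk => ?_
    rw [real_inner_smul_right]
    by_cases hkr : k = r
    · rw [hkr, hdr0, zero_mul]
    · exact mul_nonpos_of_nonneg_of_nonpos (hd k)
        (S.simple_inner_nonpos hsl hr hk (fun h => hkr h.symm))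
  have hkey : 0 ≤ ⟪β, (α0 - β) - S.a r⟫ := by
    rw [hcrep, inner_sub_right, inner_sum]
    have hterm : ∀ i ∈ Finset.Icc 1 n, ⟪β, c i • S.a i⟫ = c i * ⟪β, S.a i⟫ := fun i _ =>
      real_inner_smul_right _ _ _
    rw [Finset.sum_congr rfl hterm, ← Finset.add_sum_erase _ _ hr, hcr, one_mul]
    have hnn : ∀ i ∈ (Finset.Icc 1 n).erase r, 0 ≤ c i * ⟪β, S.a i⟫ := fun i hi =>
      mul_nonneg (hc i) (hord i (Finset.mem_of_mem_erase hi) (Finset.ne_of_mem_erase hi))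
    have hsumnn := Finset.sum_nonneg hnn
    linarith
  have hδR : α0 - S.a r ∈ S.R := by
    have h8 := S.refl_mem (S.a r) harR α0 hα0R
    rw [sref_apply'] at h8
    have hsc : 2 * ⟪α0, S.a r⟫ / ⟪S.a r, S.a r⟫ = 1 := by
      have := hfund r hr; rwa [if_pos rfl] at this
    rwa [hsc, one_smul] at h8
  have hδδ : ⟪α0 - S.a r, α0 - S.a r⟫ = ⟪α0, α0⟫ := hsl _ hδR _ hα0R
  have hβδ : ⟪α0, α0⟫ ≤ ⟪β, α0 - S.a r⟫ := by
    have h7 : ⟪β, (α0 - β) - S.a r⟫ = ⟪β, α0 - S.a r⟫ - ⟪β, β⟫ := by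
      rw [show (α0 - β) - S.a r = (α0 - S.a r) - β by abel, inner_sub_right]
    rw [h7, hββ] at hkey
    linarith
  have hfin : ⟪β - (α0 - S.a r), β - (α0 - S.a r)⟫ ≤ 0 := by
    rw [real_inner_sub_sub_self, hββ, hδδ]
    linarith
  have hz : β - (α0 - S.a r) = 0 :=
    inner_self_eq_zero.mp (le_antisymm hfin real_inner_self_nonneg)
  exact sub_eq_zero.mp hz


end PaperFormal
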